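/- Suppose the finite Markov chains 𝒳 and 𝒴 are stationary and p is a probability distribution on ℕ with full support (p(t) > 0 for all t ∈ ℕ). Then for any cost matrix C: X×Y → ℝ₊, d_OTC(𝒳,𝒴;C) = 0 if and only if d_OTM^p(𝒳,𝒴;C) = 0. -/

import Mathlib

open scoped BigOperators
open Filter Topology

/-- A probability vector on a finite type. -/
def IsProb {X : Type*} [Fintype X] (ν : X → ℝ) : Prop :=
  (∀ x, 0 ≤ ν x) ∧ ∑ x, ν x = 1

/-- `μ` is a coupling of `α` and `β`. -/
def IsCoupling {X Y : Type*} [Fintype X] [Fintype Y]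
    (μ : X × Y → ℝ) (α : X → ℝ) (β : Y → ℝ) : Prop :=
  (∀ z, 0 ≤ μ z) ∧ (∀ x, ∑ y, μ (x, y) = α x) ∧ (∀ y, ∑ x, μ (x, y) = β y)

/-- A finite Markov chain: a transition kernel together with an initial distribution. -/
structure MarkovChain (X : Type*) [Fintype X] where
  kernel : X → X → ℝ
  init : X → ℝ
  kernel_prob : ∀ x, IsProb (kernel x)
  init_prob : IsProb init

/-- A Markovian coupling between two finite Markov chains.  `trans t` is the
transition coupling used from time `t` to time `t+1` (i.e. `m^{(t+1)}`). -/
structure MarkovCoupling {X Y : Type*} [Fintype X] [Fintype Y]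
    (MX : MarkovChain X) (MY : MarkovChain Y) where
  init : X × Y → ℝ
  trans : ℕ → X × Y → X × Y → ℝ
  init_coupling : IsCoupling init MX.init MY.init
  trans_coupling : ∀ t xy, IsCoupling (trans t xy) (MX.kernel xy.1) (MY.kernel xy.2)

/-- Time-`t` law determined by an initial distribution and step kernels. -/
noncomputable def lawAux {X Y : Type*} [Fintype X] [Fintype Y]
    (ν : X × Y → ℝ) (m : ℕ → X × Y → X × Y → ℝ) : ℕ → X × Y → ℝ
  | 0 => ν
  | t + 1 => fun z => ∑ w : X × Y, m t w z * lawAux ν m t w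

/-- The time-`t` law of a Markovian coupling. -/
noncomputable def MarkovCoupling.law {X Y : Type*} [Fintype X] [Fintype Y]
    {MX : MarkovChain X} {MY : MarkovChain Y} (π : MarkovCoupling MX MY) :
    ℕ → X × Y → ℝ :=
  lawAux π.init π.trans

/-- `p` is a probability distribution on `ℕ`. -/
def IsProbNat (p : ℕ → ℝ) : Prop := (∀ t, 0 ≤ p t) ∧ HasSum p 1

/-- The Optimal Transport Markov (OTM) distance associated to `p`. -/
noncomputable def dOTM {X Y : Type*} [Fintype X] [Fintype Y] (p : ℕ → ℝ)
    (MX : MarkovChain X) (MY : MarkovChain Y) (C : X × Y → ℝ) : ℝ :=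
  ⨅ π : MarkovCoupling MX MY, ∑' t, p t * ∑ z : X × Y, C z * π.law t z

/-- A Markovian coupling is time homogeneous if its transition couplings do not
depend on the time index. -/
def IsTimeHomogeneous {X Y : Type*} [Fintype X] [Fintype Y]
    {MX : MarkovChain X} {MY : MarkovChain Y} (π : MarkovCoupling MX MY) : Prop :=
  ∀ t, π.trans t = π.trans 0

/-- The initial coupling is stationary for the coupled transition kernel. -/
def HasStationaryInit {X Y : Type*} [Fintype X] [Fintype Y]
    {MX : MarkovChain X} {MY : MarkovChain Y} (π : MarkovCoupling MX MY) : Prop :=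
  ∀ z' : X × Y, ∑ z : X × Y, π.trans 0 z z' * π.init z = π.init z'

/-- A Markov chain is stationary if its initial distribution is stationary for its kernel. -/
def IsStationaryChain {X : Type*} [Fintype X] (M : MarkovChain X) : Prop :=
  ∀ x', ∑ x, M.kernel x x' * M.init x = M.init x'

/-- The optimal transition coupling (OTC) distance. -/
noncomputable def dOTC {X Y : Type*} [Fintype X] [Fintype Y]
    (MX : MarkovChain X) (MY : MarkovChain Y) (C : X × Y → ℝ) : ℝ :=
  ⨅ π : {π : MarkovCoupling MX MY // IsTimeHomogeneous π ∧ HasStationaryInit π},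
    ∑ z : X × Y, C z * π.1.init z

section Aux
variable {X Y : Type*} [Fintype X] [Fintype Y] {MX : MarkovChain X} {MY : MarkovChain Y}
  (π : MarkovCoupling MX MY)

lemma law_zero : π.law 0 = π.init := rfl

lemma law_succ (t : ℕ) (z : X × Y) :
    π.law (t + 1) z = ∑ w : X × Y, π.trans t w z * π.law t w := rfl

lemma law_nonneg : ∀ t z, 0 ≤ π.law t z
  | 0, z => π.init_coupling.1 z
  | t + 1, z => Finset.sum_nonneg fun w _ =>
      mul_nonneg ((π.trans_coupling t w).1 z) (law_nonneg t w)

lemma trans_sum (t : ℕ) (z : X × Y) : ∑ z' : X × Y, π.trans t z z' = 1 := by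
  rw [Fintype.sum_prod_type]
  calc ∑ x', ∑ y', π.trans t z (x', y') = ∑ x', MX.kernel z.1 x' :=
        Finset.sum_congr rfl fun x' _ => (π.trans_coupling t z).2.1 x'
    _ = 1 := (MX.kernel_prob z.1).2

lemma init_sum : ∑ z : X × Y, π.init z = 1 := by
  rw [Fintype.sum_prod_type]
  calc ∑ x, ∑ y, π.init (x, y) = ∑ x, MX.init x :=
        Finset.sum_congr rfl fun x _ => π.init_coupling.2.1 x
    _ = 1 := MX.init_prob.2

lemma law_sum : ∀ t, ∑ z : X × Y, π.law t z = 1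
  | 0 => init_sum π
  | t + 1 => by
      simp only [law_succ]
      rw [Finset.sum_comm]
      calc ∑ w : X × Y, ∑ z : X × Y, π.trans t w z * π.law t w
          = ∑ w : X × Y, π.law t w := by
            refine Finset.sum_congr rfl fun w _ => ?_
            rw [← Finset.sum_mul, trans_sum, one_mul]
        _ = 1 := law_sum t

lemma law_le_one (t : ℕ) (z : X × Y) : π.law t z ≤ 1 := by
  calc π.law t z ≤ ∑ w : X × Y, π.law t w :=
        Finset.single_le_sum (fun w _ => law_nonneg π t w) (Finset.mem_univ z)
    _ = 1 := law_sum π t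

lemma lawX (hMX : IsStationaryChain MX) : ∀ t x, ∑ y, π.law t (x, y) = MX.init x
  | 0, x => π.init_coupling.2.1 x
  | t + 1, x => by
      simp only [law_succ]
      rw [Finset.sum_comm]
      calc ∑ w : X × Y, ∑ y, π.trans t w (x, y) * π.law t w
          = ∑ w : X × Y, MX.kernel w.1 x * π.law t w := by
            refine Finset.sum_congr rfl fun w _ => ?_
            rw [← Finset.sum_mul, (π.trans_coupling t w).2.1 x]
        _ = ∑ x1, MX.kernel x1 x * ∑ y1, π.law t (x1, y1) := by
            rw [Fintype.sum_prod_type]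
            exact Finset.sum_congr rfl fun x1 _ => by rw [Finset.mul_sum]
        _ = ∑ x1, MX.kernel x1 x * MX.init x1 := by
            refine Finset.sum_congr rfl fun x1 _ => ?_
            rw [lawX hMX t x1]
        _ = MX.init x := hMX x

lemma lawY (hMY : IsStationaryChain MY) : ∀ t y, ∑ x, π.law t (x, y) = MY.init y
  | 0, y => π.init_coupling.2.2 y
  | t + 1, y => by
      simp only [law_succ]
      have : ∀ x : X, ∑ w : X × Y, π.trans t w (x, y) * π.law t w
          = ∑ w : X × Y, π.trans t w (x, y) * π.law t w := fun _ => rfl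
      rw [Finset.sum_comm]
      calc ∑ w : X × Y, ∑ x, π.trans t w (x, y) * π.law t w
          = ∑ w : X × Y, MY.kernel w.2 y * π.law t w := by
            refine Finset.sum_congr rfl fun w _ => ?_
            rw [← Finset.sum_mul, (π.trans_coupling t w).2.2 y]
        _ = ∑ y1, MY.kernel y1 y * ∑ x1, π.law t (x1, y1) := by
            rw [Fintype.sum_prod_type_right]
            exact Finset.sum_congr rfl fun y1 _ => by rw [Finset.mul_sum]
        _ = ∑ y1, MY.kernel y1 y * MY.init y1 := by
            refine Finset.sum_congr rfl fun y1 _ => ?_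
            rw [lawY hMY t y1]
        _ = MY.init y := hMY y

end Aux

section Construct
variable {X Y : Type*} [Fintype X] [Fintype Y] {MX : MarkovChain X} {MY : MarkovChain Y}

/-- The independent (product) coupling. -/
noncomputable def prodCoupling (MX : MarkovChain X) (MY : MarkovChain Y) :
    MarkovCoupling MX MY where
  init := fun z => MX.init z.1 * MY.init z.2
  trans := fun _ z z' => MX.kernel z.1 z'.1 * MY.kernel z.2 z'.2
  init_coupling := by
    refine ⟨fun z => mul_nonneg (MX.init_prob.1 _) (MY.init_prob.1 _), fun x => ?_, fun y => ?_⟩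
    · show ∑ y, MX.init x * MY.init y = _
      rw [← Finset.mul_sum, MY.init_prob.2, mul_one]
    · show ∑ x, MX.init x * MY.init y = _
      rw [← Finset.sum_mul, MX.init_prob.2, one_mul]
  trans_coupling := by
    intro t z
    refine ⟨fun z' => mul_nonneg ((MX.kernel_prob _).1 _) ((MY.kernel_prob _).1 _),
      fun x => ?_, fun y => ?_⟩
    · show ∑ y', MX.kernel z.1 x * MY.kernel z.2 y' = _
      rw [← Finset.mul_sum, (MY.kernel_prob _).2, mul_one]
    · show ∑ x', MX.kernel z.1 x' * MY.kernel z.2 y = _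
      rw [← Finset.sum_mul, (MX.kernel_prob _).2, one_mul]

instance : Nonempty (MarkovCoupling MX MY) := ⟨prodCoupling MX MY⟩

lemma prodCoupling_stationary (hMX : IsStationaryChain MX) (hMY : IsStationaryChain MY) :
    HasStationaryInit (prodCoupling MX MY) := by
  intro z'
  show ∑ z : X × Y, MX.kernel z.1 z'.1 * MY.kernel z.2 z'.2 * (MX.init z.1 * MY.init z.2) = _
  rw [Fintype.sum_prod_type]
  calc ∑ x, ∑ y, MX.kernel x z'.1 * MY.kernel y z'.2 * (MX.init x * MY.init y)
      = (∑ x, MX.kernel x z'.1 * MX.init x) * ∑ y, MY.kernel y z'.2 * MY.init y := by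
        rw [Finset.sum_mul_sum]
        exact Finset.sum_congr rfl fun x _ => Finset.sum_congr rfl fun y _ => by ring
    _ = MX.init z'.1 * MY.init z'.2 := by rw [hMX, hMY]

lemma law_of_stationary (π : MarkovCoupling MX MY) (h1 : IsTimeHomogeneous π)
    (h2 : HasStationaryInit π) : ∀ t, π.law t = π.init
  | 0 => rfl
  | t + 1 => by
      funext z'
      rw [law_succ, ← h2 z']
      refine Finset.sum_congr rfl fun w _ => ?_
      rw [h1 t, law_of_stationary π h1 h2 t]

/-- Construction of a stationary time-homogeneous coupling from an "edge measure" `Q`. -/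
lemma exists_coupling_of_Q (Q : (X × Y) × (X × Y) → ℝ)
    (hQ0 : ∀ e, 0 ≤ Q e)
    (hQX : ∀ z x', ∑ y', Q (z, (x', y')) = (∑ z', Q (z, z')) * MX.kernel z.1 x')
    (hQY : ∀ z y', ∑ x', Q (z, (x', y')) = (∑ z', Q (z, z')) * MY.kernel z.2 y')
    (hQ2 : ∀ z', ∑ z, Q (z, z') = ∑ w, Q (z', w))
    (hνX : ∀ x, ∑ y, (∑ z', Q ((x, y), z')) = MX.init x)
    (hνY : ∀ y, ∑ x, (∑ z', Q ((x, y), z')) = MY.init y) :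
    ∃ π : MarkovCoupling MX MY, IsTimeHomogeneous π ∧ HasStationaryInit π ∧
      π.init = fun z => ∑ z', Q (z, z') := by
  set ν : X × Y → ℝ := fun z => ∑ z', Q (z, z') with hν
  have hν0 : ∀ z, 0 ≤ ν z := fun z => Finset.sum_nonneg fun z' _ => hQ0 _
  have hQle : ∀ z z', Q (z, z') ≤ ν z := fun z z' =>
    Finset.single_le_sum (fun w _ => hQ0 (z, w)) (Finset.mem_univ z')
  set m : X × Y → X × Y → ℝ := fun z z' =>
    if 0 < ν z then Q (z, z') / ν z else MX.kernel z.1 z'.1 * MY.kernel z.2 z'.2 with hm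
  have hcoup : ∀ z : X × Y, IsCoupling (m z) (MX.kernel z.1) (MY.kernel z.2) := by
    intro z
    by_cases h : 0 < ν z
    · refine ⟨fun z' => ?_, fun x' => ?_, fun y' => ?_⟩
      · simp only [hm, if_pos h]; exact div_nonneg (hQ0 _) h.le
      · simp only [hm, if_pos h]
        rw [← Finset.sum_div, hQX]
        exact mul_div_cancel_left₀ _ h.ne'
      · simp only [hm, if_pos h]
        rw [← Finset.sum_div, hQY]
        exact mul_div_cancel_left₀ _ h.ne'
    · refine ⟨fun z' => ?_, fun x' => ?_, fun y' => ?_⟩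
      · simp only [hm, if_neg h]
        exact mul_nonneg ((MX.kernel_prob _).1 _) ((MY.kernel_prob _).1 _)
      · simp only [hm, if_neg h]
        rw [← Finset.mul_sum, (MY.kernel_prob _).2, mul_one]
      · simp only [hm, if_neg h]
        rw [← Finset.sum_mul, (MX.kernel_prob _).2, one_mul]
  refine ⟨⟨ν, fun _ => m, ⟨hν0, hνX, hνY⟩, fun t z => hcoup z⟩, fun t => rfl, ?_, rfl⟩
  intro z'
  show ∑ z : X × Y, m z z' * ν z = ν z'
  calc ∑ z : X × Y, m z z' * ν z = ∑ z : X × Y, Q (z, z') := by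
        refine Finset.sum_congr rfl fun z _ => ?_
        by_cases h : 0 < ν z
        · simp only [hm, if_pos h]; rw [div_mul_cancel₀ _ h.ne']
        · have hz : ν z = 0 := le_antisymm (not_lt.mp h) (hν0 z)
          have : Q (z, z') = 0 := le_antisymm (hz ▸ hQle z z') (hQ0 _)
          rw [hz, this, mul_zero]
    _ = ν z' := hQ2 z'
end Construct

section EdgeQ
variable {X Y : Type*} [Fintype X] [Fintype Y] {MX : MarkovChain X} {MY : MarkovChain Y}
  (π : MarkovCoupling MX MY) (n : ℕ)

/-- Cesàro-averaged edge measure of a Markovian coupling. -/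
noncomputable def edgeQ : (X × Y) × (X × Y) → ℝ :=
  fun e => (∑ t ∈ Finset.range (n + 1), π.law t e.1 * π.trans t e.1 e.2) / (n + 1)

lemma edgeQ_nonneg (e : (X × Y) × (X × Y)) : 0 ≤ edgeQ π n e := by
  refine div_nonneg (Finset.sum_nonneg fun t _ =>
    mul_nonneg (law_nonneg π t _) ((π.trans_coupling t _).1 _)) (by positivity)

lemma edgeQ_fst (z : X × Y) :
    ∑ z', edgeQ π n (z, z') = (∑ t ∈ Finset.range (n + 1), π.law t z) / (n + 1) := by
  simp only [edgeQ]
  rw [← Finset.sum_div]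
  congr 1
  rw [Finset.sum_comm]
  refine Finset.sum_congr rfl fun t _ => ?_
  rw [← Finset.mul_sum, trans_sum, mul_one]

lemma edgeQ_total : ∑ e : (X × Y) × (X × Y), edgeQ π n e = 1 := by
  rw [Fintype.sum_prod_type]
  calc ∑ z : X × Y, ∑ z', edgeQ π n (z, z')
      = ∑ z : X × Y, (∑ t ∈ Finset.range (n + 1), π.law t z) / (n + 1) :=
        Finset.sum_congr rfl fun z _ => edgeQ_fst π n z
    _ = (∑ t ∈ Finset.range (n + 1), ∑ z : X × Y, π.law t z) / (n + 1) := by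
        rw [← Finset.sum_div, Finset.sum_comm]
    _ = (∑ t ∈ Finset.range (n + 1), (1 : ℝ)) / (n + 1) := by
        rw [Finset.sum_congr rfl fun t _ => law_sum π t]
    _ = 1 := by
        rw [Finset.sum_const, Finset.card_range, nsmul_eq_mul, mul_one]
        push_cast
        exact div_self (Nat.cast_add_one_ne_zero n)

lemma edgeQ_le_one (e : (X × Y) × (X × Y)) : edgeQ π n e ≤ 1 := by
  calc edgeQ π n e ≤ ∑ e' : (X × Y) × (X × Y), edgeQ π n e' :=
        Finset.single_le_sum (fun e' _ => edgeQ_nonneg π n e') (Finset.mem_univ e)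
    _ = 1 := edgeQ_total π n

lemma edgeQ_margX (z : X × Y) (x' : X) :
    ∑ y', edgeQ π n (z, (x', y')) = (∑ z', edgeQ π n (z, z')) * MX.kernel z.1 x' := by
  rw [edgeQ_fst, div_mul_eq_mul_div]
  simp only [edgeQ]
  rw [← Finset.sum_div]
  congr 1
  rw [Finset.sum_comm, Finset.sum_mul]
  refine Finset.sum_congr rfl fun t _ => ?_
  rw [← Finset.mul_sum, (π.trans_coupling t z).2.1 x']

lemma edgeQ_margY (z : X × Y) (y' : Y) :
    ∑ x', edgeQ π n (z, (x', y')) = (∑ z', edgeQ π n (z, z')) * MY.kernel z.2 y' := by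
  rw [edgeQ_fst, div_mul_eq_mul_div]
  simp only [edgeQ]
  rw [← Finset.sum_div]
  congr 1
  rw [Finset.sum_comm, Finset.sum_mul]
  refine Finset.sum_congr rfl fun t _ => ?_
  rw [← Finset.mul_sum, (π.trans_coupling t z).2.2 y']

lemma edgeQ_snd (z' : X × Y) :
    ∑ z, edgeQ π n (z, z')
      = (∑ w, edgeQ π n (z', w)) + (π.law (n + 1) z' - π.law 0 z') / (n + 1) := by
  rw [edgeQ_fst]
  simp only [edgeQ]
  rw [← Finset.sum_div]
  have h1 : ∑ z : X × Y, ∑ t ∈ Finset.range (n + 1), π.law t z * π.trans t z z'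
      = ∑ t ∈ Finset.range (n + 1), π.law (t + 1) z' := by
    rw [Finset.sum_comm]
    refine Finset.sum_congr rfl fun t _ => ?_
    rw [law_succ]
    exact Finset.sum_congr rfl fun w _ => mul_comm _ _
  rw [h1]
  have h2 := Finset.sum_range_succ' (fun t => π.law t z') (n + 1)
  have h3 := Finset.sum_range_succ (fun t => π.law t z') (n + 1)
  have key : ∑ t ∈ Finset.range (n + 1), π.law (t + 1) z'
      = (∑ t ∈ Finset.range (n + 1), π.law t z') + (π.law (n + 1) z' - π.law 0 z') := by
    linarith
  rw [key, add_div]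

lemma edgeQ_initX (hMX : IsStationaryChain MX) (x : X) :
    ∑ y, (∑ z', edgeQ π n ((x, y), z')) = MX.init x := by
  calc ∑ y, (∑ z', edgeQ π n ((x, y), z'))
      = ∑ y, (∑ t ∈ Finset.range (n + 1), π.law t (x, y)) / (n + 1) :=
        Finset.sum_congr rfl fun y _ => edgeQ_fst π n (x, y)
    _ = (∑ t ∈ Finset.range (n + 1), ∑ y, π.law t (x, y)) / (n + 1) := by
        rw [← Finset.sum_div, Finset.sum_comm]
    _ = (∑ t ∈ Finset.range (n + 1), MX.init x) / (n + 1) := by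
        rw [Finset.sum_congr rfl fun t _ => lawX π hMX t x]
    _ = MX.init x := by
        rw [Finset.sum_const, Finset.card_range, nsmul_eq_mul]
        push_cast
        rw [mul_div_assoc, mul_comm, div_mul_cancel₀ _ (Nat.cast_add_one_ne_zero n)]

lemma edgeQ_initY (hMY : IsStationaryChain MY) (y : Y) :
    ∑ x, (∑ z', edgeQ π n ((x, y), z')) = MY.init y := by
  calc ∑ x, (∑ z', edgeQ π n ((x, y), z'))
      = ∑ x, (∑ t ∈ Finset.range (n + 1), π.law t (x, y)) / (n + 1) :=
        Finset.sum_congr rfl fun x _ => edgeQ_fst π n (x, y)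
    _ = (∑ t ∈ Finset.range (n + 1), ∑ x, π.law t (x, y)) / (n + 1) := by
        rw [← Finset.sum_div, Finset.sum_comm]
    _ = (∑ t ∈ Finset.range (n + 1), MY.init y) / (n + 1) := by
        rw [Finset.sum_congr rfl fun t _ => lawY π hMY t y]
    _ = MY.init y := by
        rw [Finset.sum_const, Finset.card_range, nsmul_eq_mul]
        push_cast
        rw [mul_div_assoc, mul_comm, div_mul_cancel₀ _ (Nat.cast_add_one_ne_zero n)]

lemma edgeQ_cost (C : X × Y → ℝ) :
    ∑ z, C z * (∑ z', edgeQ π n (z, z'))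
      = (∑ t ∈ Finset.range (n + 1), ∑ z, C z * π.law t z) / (n + 1) := by
  calc ∑ z, C z * (∑ z', edgeQ π n (z, z'))
      = ∑ z : X × Y, (C z * ∑ t ∈ Finset.range (n + 1), π.law t z) / (n + 1) := by
        refine Finset.sum_congr rfl fun z _ => ?_
        rw [edgeQ_fst, mul_div_assoc]
    _ = (∑ z : X × Y, ∑ t ∈ Finset.range (n + 1), C z * π.law t z) / (n + 1) := by
        rw [← Finset.sum_div]
        congr 1
        exact Finset.sum_congr rfl fun z _ => Finset.mul_sum _ _ _
    _ = _ := by rw [Finset.sum_comm]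

end EdgeQ

/-- For stationary Markov chains and a fully supported distribution `p` on ℕ,
the OTC distance vanishes iff the OTM distance does. -/
theorem stmt3 {X Y : Type*} [Fintype X] [Fintype Y]
    (MX : MarkovChain X) (MY : MarkovChain Y)
    (hMX : IsStationaryChain MX) (hMY : IsStationaryChain MY)
    (C : X × Y → ℝ) (hC : ∀ z, 0 ≤ C z)
    (p : ℕ → ℝ) (hp : IsProbNat p) (hfull : ∀ t, 0 < p t) :
    dOTC MX MY C = 0 ↔ dOTM p MX MY C = 0 := by
  classical
  have hC0 : ∀ (π : MarkovCoupling MX MY) (t : ℕ), 0 ≤ ∑ z : X × Y, C z * π.law t z :=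
    fun π t => Finset.sum_nonneg fun z _ => mul_nonneg (hC z) (law_nonneg π t z)
  have hterm0 : ∀ (π : MarkovCoupling MX MY) (t : ℕ),
      0 ≤ p t * ∑ z : X × Y, C z * π.law t z :=
    fun π t => mul_nonneg (hp.1 t) (hC0 π t)
  have hOTMbdd : BddBelow (Set.range fun π : MarkovCoupling MX MY =>
      ∑' t, p t * ∑ z : X × Y, C z * π.law t z) := by
    refine ⟨0, ?_⟩
    rintro x ⟨π, rfl⟩
    exact tsum_nonneg (hterm0 π)
  have hOTM0 : 0 ≤ dOTM p MX MY C := le_ciInf fun π => tsum_nonneg (hterm0 π)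
  constructor
  · -- dOTC = 0 → dOTM = 0
    intro h0
    haveI hne : Nonempty {π : MarkovCoupling MX MY // IsTimeHomogeneous π ∧ HasStationaryInit π} :=
      ⟨⟨prodCoupling MX MY, fun _ => rfl, prodCoupling_stationary hMX hMY⟩⟩
    refine le_antisymm ?_ hOTM0
    by_contra hcon
    push_neg at hcon
    have hlt : dOTC MX MY C < dOTM p MX MY C := by rw [h0]; exact hcon
    obtain ⟨⟨π, hhom, hstat⟩, hπ⟩ := exists_lt_of_ciInf_lt hlt
    have hlaw := law_of_stationary π hhom hstat
    have hval : ∑' t, p t * ∑ z : X × Y, C z * π.law t z = ∑ z : X × Y, C z * π.init z := by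
      have heq : ∀ t : ℕ, p t * ∑ z : X × Y, C z * π.law t z
          = p t * ∑ z : X × Y, C z * π.init z := fun t => by rw [hlaw t]
      rw [tsum_congr heq, tsum_mul_right, hp.2.tsum_eq, one_mul]
    have hle : dOTM p MX MY C ≤ ∑ z : X × Y, C z * π.init z := hval ▸ ciInf_le hOTMbdd π
    exact absurd (hle.trans_lt hπ) (lt_irrefl _)
  · -- dOTM = 0 → dOTC = 0
    intro h0
    have hcost_le : ∀ (π : MarkovCoupling MX MY) (t : ℕ),
        ∑ z : X × Y, C z * π.law t z ≤ ∑ z : X × Y, C z := by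
      intro π t
      calc ∑ z : X × Y, C z * π.law t z ≤ ∑ z : X × Y, C z * 1 :=
            Finset.sum_le_sum fun z _ => mul_le_mul_of_nonneg_left (law_le_one π t z) (hC z)
        _ = ∑ z : X × Y, C z := by simp
    have select : ∀ δ : ℝ, 0 < δ → ∃ π : MarkovCoupling MX MY,
        ∀ t, p t * ∑ z : X × Y, C z * π.law t z < δ := by
      intro δ hδ
      have h1 : dOTM p MX MY C < δ := by rw [h0]; exact hδ
      obtain ⟨π, hπ⟩ := exists_lt_of_ciInf_lt h1
      refine ⟨π, fun t => lt_of_le_of_lt ?_ hπ⟩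
      have hsummable : Summable fun t => p t * ∑ z : X × Y, C z * π.law t z := by
        refine Summable.of_nonneg_of_le (hterm0 π) (fun t' => ?_)
          ((hp.2.summable).mul_right (∑ z : X × Y, C z))
        exact mul_le_mul_of_nonneg_left (hcost_le π t') (hp.1 t')
      exact Summable.le_tsum hsummable t fun t' _ => hterm0 π t'
    -- choose a sequence of increasingly good couplings
    set Bn : ℕ → ℝ := fun n => ∑ t ∈ Finset.range (n + 1), 1 / p t with hBndef
    have hBn0 : ∀ n, 0 ≤ Bn n := fun n =>
      Finset.sum_nonneg fun t _ => one_div_nonneg.mpr (hfull t).le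
    have hδpos : ∀ n : ℕ, 0 < 1 / (1 + Bn n) := fun n =>
      div_pos one_pos (by linarith [hBn0 n])
    choose seq hseq using fun n => select (1 / (1 + Bn n)) (hδpos n)
    -- the averaged edge measures lie in a compact set
    set Qn : ℕ → ((X × Y) × (X × Y)) → ℝ := fun n => edgeQ (seq n) n with hQndef
    have hmem : ∀ n, Qn n ∈ Set.Icc (0 : ((X × Y) × (X × Y)) → ℝ) 1 := by
      intro n
      exact ⟨fun e => edgeQ_nonneg (seq n) n e, fun e => edgeQ_le_one (seq n) n e⟩
    obtain ⟨Q, hQmem, φ, hφ, hconv⟩ := isCompact_Icc.tendsto_subseq hmem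
    have hconv' : ∀ e, Filter.Tendsto (fun n => Qn (φ n) e) Filter.atTop (nhds (Q e)) := by
      intro e
      have := tendsto_pi_nhds.mp hconv e
      simpa [Function.comp] using this
    set ν : X × Y → ℝ := fun z => ∑ z', Q (z, z') with hνdef
    have hlam : ∀ z, Filter.Tendsto (fun n => ∑ z', Qn (φ n) (z, z'))
        Filter.atTop (nhds (ν z)) := fun z =>
      tendsto_finset_sum _ fun z' _ => hconv' (z, z')
    -- limit identities
    have hQ0 : ∀ e, 0 ≤ Q e := fun e => hQmem.1 e
    have hQX : ∀ (z : X × Y) (x' : X),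
        ∑ y', Q (z, (x', y')) = (∑ z', Q (z, z')) * MX.kernel z.1 x' := by
      intro z x'
      have t1 : Filter.Tendsto (fun n => ∑ y', Qn (φ n) (z, (x', y')))
          Filter.atTop (nhds (∑ y', Q (z, (x', y')))) :=
        tendsto_finset_sum _ fun y' _ => hconv' (z, (x', y'))
      have t2 : Filter.Tendsto (fun n => ∑ y', Qn (φ n) (z, (x', y')))
          Filter.atTop (nhds (ν z * MX.kernel z.1 x')) := by
        have := (hlam z).mul_const (MX.kernel z.1 x')
        refine this.congr fun n => ?_
        exact (edgeQ_margX (seq (φ n)) (φ n) z x').symm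
      exact tendsto_nhds_unique t1 t2
    have hQY : ∀ (z : X × Y) (y' : Y),
        ∑ x', Q (z, (x', y')) = (∑ z', Q (z, z')) * MY.kernel z.2 y' := by
      intro z y'
      have t1 : Filter.Tendsto (fun n => ∑ x', Qn (φ n) (z, (x', y')))
          Filter.atTop (nhds (∑ x', Q (z, (x', y')))) :=
        tendsto_finset_sum _ fun x' _ => hconv' (z, (x', y'))
      have t2 : Filter.Tendsto (fun n => ∑ x', Qn (φ n) (z, (x', y')))
          Filter.atTop (nhds (ν z * MY.kernel z.2 y')) := by
        have := (hlam z).mul_const (MY.kernel z.2 y')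
        refine this.congr fun n => ?_
        exact (edgeQ_margY (seq (φ n)) (φ n) z y').symm
      exact tendsto_nhds_unique t1 t2
    have herr : ∀ z' : X × Y, Filter.Tendsto
        (fun n => ((seq (φ n)).law (φ n + 1) z' - (seq (φ n)).law 0 z') / (φ n + 1))
        Filter.atTop (nhds 0) := by
      intro z'
      have hg : Filter.Tendsto (fun n : ℕ => 2 * (1 / ((n : ℝ) + 1)))
          Filter.atTop (nhds 0) := by
        simpa using (tendsto_one_div_add_atTop_nhds_zero_nat (𝕜 := ℝ)).const_mul 2
      refine squeeze_zero_norm (fun n => ?_) hg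
      have h1 : |(seq (φ n)).law (φ n + 1) z' - (seq (φ n)).law 0 z'| ≤ 2 := by
        have a1 := law_nonneg (seq (φ n)) (φ n + 1) z'
        have a2 := law_le_one (seq (φ n)) (φ n + 1) z'
        have b1 := law_nonneg (seq (φ n)) 0 z'
        have b2 := law_le_one (seq (φ n)) 0 z'
        rw [abs_le]; constructor <;> linarith
      have h2 : (0 : ℝ) < (φ n : ℝ) + 1 := by positivity
      have h3 : ((n : ℝ) + 1) ≤ ((φ n : ℝ) + 1) := by
        have h := hφ.le_apply (x := n)
        have : (n : ℝ) ≤ (φ n : ℝ) := Nat.cast_le.mpr h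
        linarith
      calc ‖((seq (φ n)).law (φ n + 1) z' - (seq (φ n)).law 0 z') / (φ n + 1)‖
          = |(seq (φ n)).law (φ n + 1) z' - (seq (φ n)).law 0 z'| / ((φ n : ℝ) + 1) := by
            rw [Real.norm_eq_abs, abs_div, abs_of_pos h2]
        _ ≤ 2 / ((φ n : ℝ) + 1) := by gcongr
        _ ≤ 2 / ((n : ℝ) + 1) := by gcongr
        _ = 2 * (1 / ((n : ℝ) + 1)) := by ring
    have hQ2 : ∀ z' : X × Y, ∑ z, Q (z, z') = ∑ w, Q (z', w) := by
      intro z'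
      have t1 : Filter.Tendsto (fun n => ∑ z, Qn (φ n) (z, z'))
          Filter.atTop (nhds (∑ z, Q (z, z'))) :=
        tendsto_finset_sum _ fun z _ => hconv' (z, z')
      have t2 : Filter.Tendsto (fun n => ∑ z, Qn (φ n) (z, z'))
          Filter.atTop (nhds (ν z' + 0)) := by
        have := (hlam z').add (herr z')
        refine this.congr fun n => ?_
        exact (edgeQ_snd (seq (φ n)) (φ n) z').symm
      rw [add_zero] at t2
      exact tendsto_nhds_unique t1 t2
    have hνX : ∀ x, ∑ y, (∑ z', Q ((x, y), z')) = MX.init x := by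
      intro x
      have t1 : Filter.Tendsto (fun n => ∑ y, ∑ z', Qn (φ n) ((x, y), z'))
          Filter.atTop (nhds (∑ y, (∑ z', Q ((x, y), z')))) :=
        tendsto_finset_sum _ fun y _ => hlam (x, y)
      have t2 : Filter.Tendsto (fun n => ∑ y, ∑ z', Qn (φ n) ((x, y), z'))
          Filter.atTop (nhds (MX.init x)) := by
        refine tendsto_const_nhds.congr fun n => ?_
        exact (edgeQ_initX (seq (φ n)) (φ n) hMX x).symm
      exact tendsto_nhds_unique t1 t2
    have hνY : ∀ y, ∑ x, (∑ z', Q ((x, y), z')) = MY.init y := by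
      intro y
      have t1 : Filter.Tendsto (fun n => ∑ x, ∑ z', Qn (φ n) ((x, y), z'))
          Filter.atTop (nhds (∑ x, (∑ z', Q ((x, y), z')))) :=
        tendsto_finset_sum _ fun x _ => hlam (x, y)
      have t2 : Filter.Tendsto (fun n => ∑ x, ∑ z', Qn (φ n) ((x, y), z'))
          Filter.atTop (nhds (MY.init y)) := by
        refine tendsto_const_nhds.congr fun n => ?_
        exact (edgeQ_initY (seq (φ n)) (φ n) hMY y).symm
      exact tendsto_nhds_unique t1 t2
    -- the limiting initial coupling has zero cost
    have hcost0 : ∑ z : X × Y, C z * ν z = 0 := by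
      have t1 : Filter.Tendsto (fun n => ∑ z : X × Y, C z * ∑ z', Qn (φ n) (z, z'))
          Filter.atTop (nhds (∑ z : X × Y, C z * ν z)) :=
        tendsto_finset_sum _ fun z _ => (hlam z).const_mul (C z)
      have hbound : ∀ n, ∑ z : X × Y, C z * ∑ z', Qn (φ n) (z, z') ≤ 1 / ((n : ℝ) + 1) := by
        intro n
        rw [hQndef]
        rw [edgeQ_cost]
        have hcost_t : ∀ t, ∑ z : X × Y, C z * (seq (φ n)).law t z ≤ (1 / (1 + Bn (φ n))) / p t := by
          intro t
          rw [le_div_iff₀ (hfull t)]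
          have := hseq (φ n) t
          nlinarith [hfull t, hC0 (seq (φ n)) t]
        have hsum_le : ∑ t ∈ Finset.range (φ n + 1), ∑ z : X × Y, C z * (seq (φ n)).law t z ≤ 1 := by
          calc ∑ t ∈ Finset.range (φ n + 1), ∑ z : X × Y, C z * (seq (φ n)).law t z
              ≤ ∑ t ∈ Finset.range (φ n + 1), (1 / (1 + Bn (φ n))) / p t :=
                Finset.sum_le_sum fun t _ => hcost_t t
            _ = (1 / (1 + Bn (φ n))) * Bn (φ n) := by
                rw [hBndef, Finset.mul_sum]
                exact Finset.sum_congr rfl fun t _ => by rw [div_eq_mul_one_div]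
            _ ≤ 1 := by
                rw [div_mul_eq_mul_div, one_mul, div_le_one (by linarith [hBn0 (φ n)] : (0:ℝ) < 1 + Bn (φ n))]
                linarith [hBn0 (φ n)]
        calc (∑ t ∈ Finset.range (φ n + 1), ∑ z : X × Y, C z * (seq (φ n)).law t z) / ((φ n : ℝ) + 1)
            ≤ 1 / ((φ n : ℝ) + 1) := by
              have hpos : (0 : ℝ) < (φ n : ℝ) + 1 := by positivity
              exact div_le_div_of_nonneg_right hsum_le hpos.le
          _ ≤ 1 / ((n : ℝ) + 1) := by
              have h : (n : ℝ) ≤ (φ n : ℝ) := Nat.cast_le.mpr (hφ.le_apply (x := n))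
              exact one_div_le_one_div_of_le (by positivity) (by linarith)
      have hnonneg : ∀ n, 0 ≤ ∑ z : X × Y, C z * ∑ z', Qn (φ n) (z, z') :=
        fun n => Finset.sum_nonneg fun z _ => mul_nonneg (hC z)
          (Finset.sum_nonneg fun z' _ => edgeQ_nonneg (seq (φ n)) (φ n) (z, z'))
      have t2 : Filter.Tendsto (fun n => ∑ z : X × Y, C z * ∑ z', Qn (φ n) (z, z'))
          Filter.atTop (nhds 0) := by
        refine squeeze_zero hnonneg hbound ?_
        simpa using tendsto_one_div_add_atTop_nhds_zero_nat (𝕜 := ℝ)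
      exact tendsto_nhds_unique t1 t2
    -- build the stationary time-homogeneous coupling
    obtain ⟨πb, hhom, hstat, hinit⟩ := exists_coupling_of_Q Q hQ0 hQX hQY hQ2 hνX hνY
    haveI hne : Nonempty {π : MarkovCoupling MX MY // IsTimeHomogeneous π ∧ HasStationaryInit π} :=
      ⟨⟨πb, hhom, hstat⟩⟩
    have hOTC0 : 0 ≤ dOTC MX MY C :=
      le_ciInf fun π' => Finset.sum_nonneg fun z _ =>
        mul_nonneg (hC z) (π'.1.init_coupling.1 z)
    have hOTCbdd : BddBelow (Set.range fun
        π : {π : MarkovCoupling MX MY // IsTimeHomogeneous π ∧ HasStationaryInit π} =>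
        ∑ z : X × Y, C z * π.1.init z) := by
      refine ⟨0, ?_⟩
      rintro x ⟨π', rfl⟩
      exact Finset.sum_nonneg fun z _ => mul_nonneg (hC z) (π'.1.init_coupling.1 z)
    have hle : dOTC MX MY C ≤ ∑ z : X × Y, C z * πb.init z :=
      ciInf_le hOTCbdd ⟨πb, hhom, hstat⟩
    have : ∑ z : X × Y, C z * πb.init z = 0 := by
      rw [hinit]; exact hcost0
    exact le_antisymm (this ▸ hle) hOTC0
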